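/- (Lemma 1, performance difference lemma.) Let π_ref and π be probability distributions on a finite set 𝒴 with π_ref(y) > 0 and π(y) > 0 for all y, let r : 𝒴 → ℝ, let β > 0, and let π⋆(y) := π_ref(y) exp(r(y)/β) / Z with Z := Σ_{y∈𝒴} π_ref(y) exp(r(y)/β). Define the value V(μ) := Σ_{y∈𝒴} μ(y) r(y) − β Σ_{y∈𝒴} μ(y) log(μ(y)/π_ref(y)) for a full-support distribution μ, and the Kullback–Leibler divergence KL(π⋆‖π) := Σ_{y∈𝒴} π⋆(y) log(π⋆(y)/π(y)). Then V(π⋆) − V(π) = Σ_{y,y'∈𝒴} π⋆(y) π(y') · ( r(y) − r(y') − β log( π(y) π_ref(y') / (π_ref(y) π(y')) ) ) − β KL(π⋆‖π), and consequently V(π⋆) − V(π) ≤ Σ_{y,y'∈𝒴} π⋆(y) π(y') · ( r(y) − r(y') − β log( π(y) π_ref(y') / (π_ref(y) π(y')) ) ). -/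

import Mathlib

/-- **Lemma 1 (Performance difference lemma).**
For full-support distributions `πref`, `π` on a finite set, reward `r`,
regularization `β > 0`, and the optimal policy
`π⋆(y) ∝ πref(y) exp(r(y)/β)`, the difference of the KL-regularized values
equals the double expectation of the implicit-reward gap minus `β·KL(π⋆‖π)`,
and is hence upper bounded by the double expectation alone. -/
theorem performance_difference_lemma
    {Y : Type*} [Fintype Y] [Nonempty Y]
    (πref π : Y → ℝ)
    (href : ∀ y, 0 < πref y) (hπ : ∀ y, 0 < π y)
    (hrefsum : ∑ y : Y, πref y = 1) (hπsum : ∑ y : Y, π y = 1)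
    (r : Y → ℝ) (β : ℝ) (hβ : 0 < β) :
    let Z : ℝ := ∑ y : Y, πref y * Real.exp (r y / β)
    let πstar : Y → ℝ := fun y => πref y * Real.exp (r y / β) / Z
    let V : (Y → ℝ) → ℝ := fun μ =>
      (∑ y : Y, μ y * r y) - β * ∑ y : Y, μ y * Real.log (μ y / πref y)
    let KL : ℝ := ∑ y : Y, πstar y * Real.log (πstar y / π y)
    V πstar - V π =
      (∑ y : Y, ∑ y' : Y, πstar y * π y' *
        (r y - r y' - β * Real.log (π y * πref y' / (πref y * π y')))) - β * KL
    ∧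
    V πstar - V π ≤
      ∑ y : Y, ∑ y' : Y, πstar y * π y' *
        (r y - r y' - β * Real.log (π y * πref y' / (πref y * π y'))) := by
  intro Z πstar V KL
  have hZ : 0 < Z := Finset.sum_pos (fun y _ => mul_pos (href y) (Real.exp_pos _))
    Finset.univ_nonempty
  have hstar : ∀ y, 0 < πstar y := fun y => div_pos (mul_pos (href y) (Real.exp_pos _)) hZ
  have hπne : ∀ y, π y ≠ 0 := fun y => (hπ y).ne'
  have hrefne : ∀ y, πref y ≠ 0 := fun y => (href y).ne'
  have hstarne : ∀ y, πstar y ≠ 0 := fun y => (hstar y).ne'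
  have hstarsum : ∑ y : Y, πstar y = 1 := by
    have h : ∑ y : Y, πstar y = (∑ y : Y, πref y * Real.exp (r y / β)) / Z :=
      (Finset.sum_div _ _ _).symm
    rw [h, div_self hZ.ne']
  -- log identity for the gap term
  have hlog : ∀ y y' : Y, Real.log (π y * πref y' / (πref y * π y')) =
      Real.log (π y / πref y) - Real.log (π y' / πref y') := by
    intro y y'
    rw [Real.log_div (mul_ne_zero (hπne y) (hrefne y')) (mul_ne_zero (hrefne y) (hπne y')),
      Real.log_mul (hπne y) (hrefne y'), Real.log_mul (hrefne y) (hπne y'),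
      Real.log_div (hπne y) (hrefne y), Real.log_div (hπne y') (hrefne y')]
    ring
  set f : Y → ℝ := fun y => r y - β * Real.log (π y / πref y) with hf
  have hDS : (∑ y : Y, ∑ y' : Y, πstar y * π y' *
        (r y - r y' - β * Real.log (π y * πref y' / (πref y * π y')))) =
      (∑ y : Y, πstar y * f y) - ∑ y : Y, π y * f y := by
    have step : ∀ y : Y, ∑ y' : Y, πstar y * π y' *
        (r y - r y' - β * Real.log (π y * πref y' / (πref y * π y'))) =
        πstar y * f y - πstar y * (∑ y' : Y, π y' * f y') := by
      intro y
      have h : ∀ y' : Y, πstar y * π y' *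
          (r y - r y' - β * Real.log (π y * πref y' / (πref y * π y'))) =
          π y' * (πstar y * f y) - πstar y * (π y' * f y') := by
        intro y'; rw [hlog]; simp only [hf]; ring
      rw [Finset.sum_congr rfl fun y' _ => h y', Finset.sum_sub_distrib,
        ← Finset.sum_mul, ← Finset.mul_sum, hπsum, one_mul]
    rw [Finset.sum_congr rfl fun y _ => step y, Finset.sum_sub_distrib,
      ← Finset.sum_mul, hstarsum, one_mul]
  -- pointwise log split
  have hsplit : ∀ y : Y, Real.log (πstar y / πref y) =
      Real.log (πstar y / π y) + Real.log (π y / πref y) := by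
    intro y
    rw [Real.log_div (hstarne y) (hrefne y), Real.log_div (hstarne y) (hπne y),
      Real.log_div (hπne y) (hrefne y)]
    ring
  have hS1 : (∑ y : Y, πstar y * f y) = V πstar + β * KL := by
    have pt : ∀ y : Y, πstar y * f y = πstar y * r y
        - β * (πstar y * Real.log (πstar y / πref y))
        + β * (πstar y * Real.log (πstar y / π y)) := by
      intro y
      simp only [hf]
      rw [show Real.log (π y / πref y) =
        Real.log (πstar y / πref y) - Real.log (πstar y / π y) by linarith [hsplit y]]
      ring
    simp only [V, KL]
    rw [Finset.sum_congr rfl fun y _ => pt y, Finset.sum_add_distrib,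
      Finset.sum_sub_distrib, ← Finset.mul_sum, ← Finset.mul_sum]
  have hS2 : (∑ y : Y, π y * f y) = V π := by
    have pt : ∀ y : Y, π y * f y = π y * r y - β * (π y * Real.log (π y / πref y)) := by
      intro y; simp only [hf]; ring
    simp only [V]
    rw [Finset.sum_congr rfl fun y _ => pt y, Finset.sum_sub_distrib, ← Finset.mul_sum]
  have heq : V πstar - V π =
      (∑ y : Y, ∑ y' : Y, πstar y * π y' *
        (r y - r y' - β * Real.log (π y * πref y' / (πref y * π y')))) - β * KL := by
    rw [hDS, hS1, hS2]; ring
  have hKL : 0 ≤ KL := by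
    have pt : ∀ y : Y, πstar y - π y ≤ πstar y * Real.log (πstar y / π y) := by
      intro y
      have h1 : Real.log (π y / πstar y) ≤ π y / πstar y - 1 :=
        Real.log_le_sub_one_of_pos (div_pos (hπ y) (hstar y))
      have h2 : Real.log (πstar y / π y) = - Real.log (π y / πstar y) := by
        rw [← Real.log_inv, inv_div]
      have h3 : πstar y * (π y / πstar y) = π y := by rw [mul_comm, div_mul_cancel₀ _ (hstarne y)]
      rw [h2]
      nlinarith [hstar y]
    calc (0:ℝ) = (∑ y : Y, πstar y) - ∑ y : Y, π y := by rw [hstarsum, hπsum]; ring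
      _ = ∑ y : Y, (πstar y - π y) := (Finset.sum_sub_distrib _ _).symm
      _ ≤ KL := Finset.sum_le_sum fun y _ => pt y
  refine ⟨heq, ?_⟩
  nlinarith [mul_nonneg hβ.le hKL]
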